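/- Let M be a pointwise finite-dimensional weakly exact persistence module over X×Y, R = (l⁺∩r⁻)×(b⁺∩t⁻) a rectangle, and N = V⁺_R(M) (which is pfd and weakly exact, so its own filtration spaces are defined). Then for every u ∈ R: (i) Im⁺_{l,u}(N) = Im⁺_{b,u}(N) = V⁺_{R,u}(M); (ii) Im⁻_{l,u}(N) = Im⁻_{b,u}(N) = 0; (iii) Ker±_{r,u}(N) = Ker±_{r,u}(M) ∩ V⁺_{R,u}(M); (iv) Ker±_{t,u}(N) = Ker±_{t,u}(M) ∩ V⁺_{R,u}(M). In particular N satisfies the condition Ker⁺_{r,u}(N) ∩ Ker⁺_{t,u}(N) ⊆ Im⁺_{R,u}(N) for all u ∈ R. -/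

import Mathlib

open CategoryTheory

attribute [local instance 10000] Preorder.smallCategory

attribute [local instance] Classical.propDecidable

abbrev PersistenceModule (K : Type) [Field K] (P : Type) [Preorder P] := P ⥤ ModuleCat.{0} K

variable (K : Type) [Field K]

/-- The internal linear map of a persistence module associated to `s ≤ t`. -/
def rho {P : Type} [Preorder P] (M : PersistenceModule K P) {s t : P} (h : s ≤ t) :
    M.obj s →ₗ[K] M.obj t :=
  (M.map (homOfLE h)).hom

def Pfd {P : Type} [Preorder P] (M : PersistenceModule K P) : Prop :=
  ∀ p : P, FiniteDimensional K (M.obj p)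

def IsConvexSet {P : Type} [Preorder P] (S : Set P) : Prop :=
  ∀ ⦃p s q : P⦄, p ≤ s → s ≤ q → p ∈ S → q ∈ S → s ∈ S

def IsConnectedSet {P : Type} [Preorder P] (S : Set P) : Prop :=
  ∀ p ∈ S, ∀ q ∈ S,
    Relation.ReflTransGen (fun a b => a ∈ S ∧ b ∈ S ∧ (a ≤ b ∨ b ≤ a)) p q

def IsIntervalSet {P : Type} [Preorder P] (S : Set P) : Prop :=
  IsConvexSet S ∧ IsConnectedSet S

def IsRectangleSet {X Y : Type} [Preorder X] [Preorder Y] (R : Set (X × Y)) : Prop :=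
  ∃ (I : Set X) (J : Set Y), IsIntervalSet I ∧ IsIntervalSet J ∧ R = I ×ˢ J

/-- The direct sum of the interval (indicator) modules of a family of convex sets. -/
noncomputable def intervalDirectSum {P : Type} [Preorder P] {ι : Type} (S : ι → Set P)
    (hS : ∀ i, IsConvexSet (S i)) : PersistenceModule K P where
  obj t := ModuleCat.of K ({i : ι // t ∈ S i} → K)
  map {s t} _ :=
    ModuleCat.ofHom (LinearMap.pi (fun j : {i : ι // t ∈ S i} =>
      if hs : (s : P) ∈ S j.1 then LinearMap.proj (⟨j.1, hs⟩ : {i : ι // s ∈ S i}) else 0))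
  map_id t := by
    refine ModuleCat.hom_ext (LinearMap.ext fun v => funext fun j => ?_)
    show ((if hs : (t : P) ∈ S j.1 then
        LinearMap.proj (⟨j.1, hs⟩ : {i : ι // t ∈ S i}) else 0 :
          ({i : ι // t ∈ S i} → K) →ₗ[K] K)) v = v j
    rw [dif_pos j.2]
    rfl
  map_comp {s t u} f g := by
    refine ModuleCat.hom_ext (LinearMap.ext fun v => funext fun j => ?_)
    show ((if hs : (s : P) ∈ S j.1 then
        LinearMap.proj (⟨j.1, hs⟩ : {i : ι // s ∈ S i}) else 0 :
          ({i : ι // s ∈ S i} → K) →ₗ[K] K)) v =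
      ((if ht : (t : P) ∈ S j.1 then
        LinearMap.proj (⟨j.1, ht⟩ : {i : ι // t ∈ S i}) else 0 :
          ({i : ι // t ∈ S i} → K) →ₗ[K] K))
        (LinearMap.pi (fun j' : {i : ι // t ∈ S i} =>
          (if hs : (s : P) ∈ S j'.1 then
            LinearMap.proj (⟨j'.1, hs⟩ : {i : ι // s ∈ S i}) else 0 :
              ({i : ι // s ∈ S i} → K) →ₗ[K] K)) v)
    by_cases hs : (s : P) ∈ S j.1
    · have ht : (t : P) ∈ S j.1 := hS j.1 (leOfHom f) (leOfHom g) hs j.2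
      rw [dif_pos hs, dif_pos ht, LinearMap.proj_apply, LinearMap.proj_apply,
        LinearMap.pi_apply, dif_pos hs]
      rfl
    · by_cases ht : (t : P) ∈ S j.1
      · rw [dif_neg hs, dif_pos ht, LinearMap.zero_apply, LinearMap.proj_apply,
          LinearMap.pi_apply, dif_neg hs, LinearMap.zero_apply]
      · rw [dif_neg hs, dif_neg ht, LinearMap.zero_apply, LinearMap.zero_apply]

def InDec {P : Type} [Preorder P] (M : PersistenceModule K P) (𝒮 : Set (Set P)) : Prop :=
  ∃ (ι : Type) (S : ι → Set P) (hS : ∀ i, IsConvexSet (S i)),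
    (∀ i, S i ∈ 𝒮) ∧ (∀ t : P, {i | t ∈ S i}.Finite) ∧
      Nonempty (M ≅ intervalDirectSum K S hS)

def restrictMod {P : Type} [Preorder P] (M : PersistenceModule K P) (Q : Set P) :
    PersistenceModule K ↥Q :=
  (Subtype.mono_coe (· ∈ Q)).functor ⋙ M

def restrictClass {P : Type} (𝒮 : Set (Set P)) (Q : Set P) : Set (Set ↥Q) :=
  {T | ∃ S ∈ 𝒮, T = Subtype.val ⁻¹' S}

/-- Weak exactness of a persistence bimodule. -/
def WeaklyExact {X Y : Type} [Preorder X] [Preorder Y]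
    (M : PersistenceModule K (X × Y)) : Prop :=
  ∀ (s t : X × Y) (h : s ≤ t),
    (LinearMap.range (rho K M h) =
      LinearMap.range (rho K M (show (t.1, s.2) ≤ t from ⟨le_rfl, h.2⟩)) ⊓
      LinearMap.range (rho K M (show (s.1, t.2) ≤ t from ⟨h.1, le_rfl⟩))) ∧
    (LinearMap.ker (rho K M h) =
      LinearMap.ker (rho K M (show s ≤ (t.1, s.2) from ⟨h.1, le_rfl⟩)) ⊔
      LinearMap.ker (rho K M (show s ≤ (s.1, t.2) from ⟨le_rfl, h.2⟩)))

/-! ## Cuts, rectangles via cuts, and the functorial filtration -/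

/-- A cut of a totally ordered set: a partition into a lower and an upper part. -/
structure Cut (X : Type) [LinearOrder X] where
  lower : Set X
  upper : Set X
  union_eq : lower ∪ upper = Set.univ
  lt : ∀ x ∈ lower, ∀ y ∈ upper, x < y

theorem Cut.mem_upper_of_le {X : Type} [LinearOrder X] (c : Cut X) {a b : X}
    (ha : a ∈ c.upper) (h : a ≤ b) : b ∈ c.upper := by
  have hb : b ∈ c.lower ∪ c.upper := by rw [c.union_eq]; trivial
  rcases hb with hb | hb
  · exact absurd h (not_le.mpr (c.lt b hb a ha))
  · exact hb

theorem Cut.mem_lower_of_le {X : Type} [LinearOrder X] (c : Cut X) {a b : X}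
    (hb : b ∈ c.lower) (h : a ≤ b) : a ∈ c.lower := by
  have hb' : a ∈ c.lower ∪ c.upper := by rw [c.union_eq]; trivial
  rcases hb' with hb' | hb'
  · exact hb'
  · exact absurd h (not_le.mpr (c.lt b hb a hb'))

/-- The rectangle `(l⁺ ∩ r⁻) × (b⁺ ∩ t⁻)` associated to four cuts. -/
def rectOf {X Y : Type} [LinearOrder X] [LinearOrder Y]
    (l r : Cut X) (b t : Cut Y) : Set (X × Y) :=
  (l.upper ∩ r.lower) ×ˢ (b.upper ∩ t.lower)

theorem isConvex_rectOf {X Y : Type} [LinearOrder X] [LinearOrder Y]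
    (l r : Cut X) (b t : Cut Y) : IsConvexSet (rectOf l r b t) := by
  rintro p s q hps hsq ⟨⟨hp1, hp2⟩, hp3, hp4⟩ ⟨⟨hq1, hq2⟩, hq3, hq4⟩
  exact ⟨⟨l.mem_upper_of_le hp1 hps.1, r.mem_lower_of_le hq2 hsq.1⟩,
    b.mem_upper_of_le hp3 hps.2, t.mem_lower_of_le hq4 hsq.2⟩

/-- The upset `R⁺` of a subset of a poset. -/
def upsetOf {P : Type} [Preorder P] (R : Set P) : Set P := {u | ∃ s ∈ R, s ≤ u}

theorem isConvex_upsetOf {P : Type} [Preorder P] (R : Set P) : IsConvexSet (upsetOf R) := by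
  rintro p s q hps _ ⟨w, hw, hwp⟩ _
  exact ⟨w, hw, hwp.trans hps⟩

theorem IsConvexSet.inter {P : Type} [Preorder P] {A B : Set P}
    (hA : IsConvexSet A) (hB : IsConvexSet B) : IsConvexSet (A ∩ B) := by
  rintro p s q hps hsq ⟨hpA, hpB⟩ ⟨hqA, hqB⟩
  exact ⟨hA hps hsq hpA hqA, hB hps hsq hpB hqB⟩

variable {X Y : Type} [LinearOrder X] [LinearOrder Y]

/-- Horizontal image space `Im⁺_{l,u}`. -/
noncomputable def ImPlusH (M : PersistenceModule K (X × Y)) (l : Cut X) (u : X × Y) :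
    Submodule K (M.obj u) :=
  ⨅ (x : X) (h : x ∈ l.upper ∧ x ≤ u.1),
    LinearMap.range (rho K M (show (x, u.2) ≤ u from ⟨h.2, le_rfl⟩))

/-- Horizontal image space `Im⁻_{l,u}`. -/
noncomputable def ImMinusH (M : PersistenceModule K (X × Y)) (l : Cut X) (u : X × Y) :
    Submodule K (M.obj u) :=
  ⨆ (x : X) (h : x ∈ l.lower ∧ x ≤ u.1),
    LinearMap.range (rho K M (show (x, u.2) ≤ u from ⟨h.2, le_rfl⟩))

/-- Horizontal kernel space `Ker⁺_{r,u}`. -/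
noncomputable def KerPlusH (M : PersistenceModule K (X × Y)) (r : Cut X) (u : X × Y) :
    Submodule K (M.obj u) :=
  ⨅ (x : X) (h : x ∈ r.upper ∧ u.1 ≤ x),
    LinearMap.ker (rho K M (show u ≤ (x, u.2) from ⟨h.2, le_rfl⟩))

/-- Horizontal kernel space `Ker⁻_{r,u}`. -/
noncomputable def KerMinusH (M : PersistenceModule K (X × Y)) (r : Cut X) (u : X × Y) :
    Submodule K (M.obj u) :=
  ⨆ (x : X) (h : x ∈ r.lower ∧ u.1 ≤ x),
    LinearMap.ker (rho K M (show u ≤ (x, u.2) from ⟨h.2, le_rfl⟩))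

/-- Vertical image space `Im⁺_{b,u}`. -/
noncomputable def ImPlusV (M : PersistenceModule K (X × Y)) (b : Cut Y) (u : X × Y) :
    Submodule K (M.obj u) :=
  ⨅ (y : Y) (h : y ∈ b.upper ∧ y ≤ u.2),
    LinearMap.range (rho K M (show (u.1, y) ≤ u from ⟨le_rfl, h.2⟩))

/-- Vertical image space `Im⁻_{b,u}`. -/
noncomputable def ImMinusV (M : PersistenceModule K (X × Y)) (b : Cut Y) (u : X × Y) :
    Submodule K (M.obj u) :=
  ⨆ (y : Y) (h : y ∈ b.lower ∧ y ≤ u.2),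
    LinearMap.range (rho K M (show (u.1, y) ≤ u from ⟨le_rfl, h.2⟩))

/-- Vertical kernel space `Ker⁺_{t,u}`. -/
noncomputable def KerPlusV (M : PersistenceModule K (X × Y)) (t : Cut Y) (u : X × Y) :
    Submodule K (M.obj u) :=
  ⨅ (y : Y) (h : y ∈ t.upper ∧ u.2 ≤ y),
    LinearMap.ker (rho K M (show u ≤ (u.1, y) from ⟨le_rfl, h.2⟩))

/-- Vertical kernel space `Ker⁻_{t,u}`. -/
noncomputable def KerMinusV (M : PersistenceModule K (X × Y)) (t : Cut Y) (u : X × Y) :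
    Submodule K (M.obj u) :=
  ⨆ (y : Y) (h : y ∈ t.lower ∧ u.2 ≤ y),
    LinearMap.ker (rho K M (show u ≤ (u.1, y) from ⟨le_rfl, h.2⟩))

/-- `Im⁺_{R,u}`. -/
noncomputable def ImPlusR (M : PersistenceModule K (X × Y)) (l : Cut X) (b : Cut Y)
    (u : X × Y) : Submodule K (M.obj u) :=
  ImPlusH K M l u ⊓ ImPlusV K M b u

/-- `Im⁻_{R,u}`. -/
noncomputable def ImMinusR (M : PersistenceModule K (X × Y)) (l : Cut X) (b : Cut Y)
    (u : X × Y) : Submodule K (M.obj u) :=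
  (ImMinusH K M l u ⊔ ImMinusV K M b u) ⊓ ImPlusR K M l b u

/-- `Ker⁺_{R,u}`. -/
noncomputable def KerPlusR (M : PersistenceModule K (X × Y)) (r : Cut X) (t : Cut Y)
    (u : X × Y) : Submodule K (M.obj u) :=
  (KerPlusH K M r u ⊔ KerMinusV K M t u) ⊓ (KerMinusH K M r u ⊔ KerPlusV K M t u)

/-- `Ker⁻_{R,u}`. -/
noncomputable def KerMinusR (M : PersistenceModule K (X × Y)) (r : Cut X) (t : Cut Y)
    (u : X × Y) : Submodule K (M.obj u) :=
  KerMinusH K M r u ⊔ KerMinusV K M t u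

/-- The pointwise functorial filtration `V⁺_{R,u}(M)` (meaningful for `u ∈ R`). -/
noncomputable def VplusAt (M : PersistenceModule K (X × Y)) (l r : Cut X) (b t : Cut Y)
    (u : X × Y) : Submodule K (M.obj u) :=
  ImPlusR K M l b u ⊓ KerPlusR K M r t u

/-- The pointwise functorial filtration `V⁻_{R,u}(M)` (meaningful for `u ∈ R`). -/
noncomputable def VminusAt (M : PersistenceModule K (X × Y)) (l r : Cut X) (b t : Cut Y)
    (u : X × Y) : Submodule K (M.obj u) :=
  ImPlusR K M l b u ⊓ KerMinusR K M r t u ⊔ ImMinusR K M l b u ⊓ KerPlusR K M r t u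

/-- The extension of `V⁺_R(M)` to a family of subspaces over all of `X × Y`
(equal to `⋃_{s ∈ R, s ≤ u} ρ_s^u(V⁺_{R,s})` on the upset of `R` and `0` elsewhere). -/
noncomputable def VplusSub (M : PersistenceModule K (X × Y)) (l r : Cut X) (b t : Cut Y)
    (u : X × Y) : Submodule K (M.obj u) :=
  ⨆ (s : X × Y) (h : s ∈ rectOf l r b t ∧ s ≤ u),
    Submodule.map (rho K M h.2) (VplusAt K M l r b t s)

/-- The extension of `V⁻_R(M)` to a family of subspaces over all of `X × Y`. -/
noncomputable def VminusSub (M : PersistenceModule K (X × Y)) (l r : Cut X) (b t : Cut Y)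
    (u : X × Y) : Submodule K (M.obj u) :=
  ⨆ (s : X × Y) (h : s ∈ rectOf l r b t ∧ s ≤ u),
    Submodule.map (rho K M h.2) (VminusAt K M l r b t s)

theorem rho_comp {P : Type} [Preorder P] (M : PersistenceModule K P) {p q r : P}
    (h1 : p ≤ q) (h2 : q ≤ r) :
    (rho K M h2).comp (rho K M h1) = rho K M (h1.trans h2) := by
  rw [rho, rho, rho, ← homOfLE_comp h1 h2, M.map_comp]
  rfl

/-- The subfunctor of a persistence module determined by a compatible family of subspaces. -/
noncomputable def subfunctor {P : Type} [Preorder P] (M : PersistenceModule K P)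
    (S : ∀ p, Submodule K (M.obj p))
    (hS : ∀ (p q : P) (h : p ≤ q), (S p).map (rho K M h) ≤ S q) :
    PersistenceModule K P where
  obj p := ModuleCat.of K ↥(S p)
  map {p q} f :=
    ModuleCat.ofHom ((rho K M (leOfHom f)).restrict
      (p := S p) (q := S q) (fun x hx => hS p q (leOfHom f) ⟨x, hx, rfl⟩))
  map_id p := by
    refine ModuleCat.hom_ext (LinearMap.ext fun x => Subtype.ext ?_)
    show (M.map (𝟙 p)).hom x.1 = x.1
    rw [M.map_id]
    rfl
  map_comp {p q r} f g := by
    refine ModuleCat.hom_ext (LinearMap.ext fun x => Subtype.ext ?_)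
    show (M.map (homOfLE ((leOfHom f).trans (leOfHom g)))).hom x.1 =
      (M.map (homOfLE (leOfHom g))).hom ((M.map (homOfLE (leOfHom f))).hom x.1)
    rw [← homOfLE_comp (leOfHom f) (leOfHom g), M.map_comp]
    rfl

theorem vplusSub_mapsTo (M : PersistenceModule K (X × Y)) (l r : Cut X) (b t : Cut Y) :
    ∀ (p q : X × Y) (h : p ≤ q),
      Submodule.map (rho K M h) (VplusSub K M l r b t p) ≤ VplusSub K M l r b t q := by
  intro p q h
  rw [VplusSub, Submodule.map_iSup]
  refine iSup_le fun s => ?_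
  rw [Submodule.map_iSup]
  refine iSup_le fun hs => ?_
  rw [← Submodule.map_comp, rho_comp K M hs.2 h]
  exact le_iSup_of_le s (le_iSup_of_le ⟨hs.1, hs.2.trans h⟩ le_rfl)

theorem vminusSub_mapsTo (M : PersistenceModule K (X × Y)) (l r : Cut X) (b t : Cut Y) :
    ∀ (p q : X × Y) (h : p ≤ q),
      Submodule.map (rho K M h) (VminusSub K M l r b t p) ≤ VminusSub K M l r b t q := by
  intro p q h
  rw [VminusSub, Submodule.map_iSup]
  refine iSup_le fun s => ?_
  rw [Submodule.map_iSup]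
  refine iSup_le fun hs => ?_
  rw [← Submodule.map_comp, rho_comp K M hs.2 h]
  exact le_iSup_of_le s (le_iSup_of_le ⟨hs.1, hs.2.trans h⟩ le_rfl)

/-- The submodule `V⁺_R(M)` of `M`, as a persistence module. -/
noncomputable def VplusMod (M : PersistenceModule K (X × Y)) (l r : Cut X) (b t : Cut Y) :
    PersistenceModule K (X × Y) :=
  subfunctor K M (VplusSub K M l r b t) (vplusSub_mapsTo K M l r b t)

/-- The submodule `V⁻_R(M)` of `M`, as a persistence module. -/
noncomputable def VminusMod (M : PersistenceModule K (X × Y)) (l r : Cut X) (b t : Cut Y) :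
    PersistenceModule K (X × Y) :=
  subfunctor K M (VminusSub K M l r b t) (vminusSub_mapsTo K M l r b t)

/-- The relation `R' σ R` on rectangles, expressed on cut decompositions. -/
def SigmaRel (l' r' : Cut X) (b' t' : Cut Y) (l r : Cut X) (b t : Cut Y) : Prop :=
  l'.lower ⊆ l.lower ∧ b'.lower ⊆ b.lower ∧
    (r'.lower ⊂ r.lower ∨ t'.lower ⊂ t.lower ∨
      (r'.lower ⊆ r.lower ∧ t'.lower ⊆ t.lower))

/-- The relation `R' σ̊ R`: `R' σ R` and `R' ≠ R`. -/
def SigmaRelStrict (l' r' : Cut X) (b' t' : Cut Y) (l r : Cut X) (b t : Cut Y) : Prop :=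
  SigmaRel l' r' b' t' l r b t ∧ rectOf l' r' b' t' ≠ rectOf l r b t

/-- The interval (indicator) module of a single convex set. -/
noncomputable abbrev singleIntervalModule {P : Type} [Preorder P] (S : Set P)
    (hS : IsConvexSet S) : PersistenceModule K P :=
  intervalDirectSum K (fun _ : PUnit => S) (fun _ => hS)

section AuxBasic

variable {P : Type} [Preorder P]

theorem rho_refl (M : PersistenceModule K P) (p : P) :
    rho K M (le_refl p) = LinearMap.id := by
  show (M.map (𝟙 p)).hom = _
  rw [M.map_id]
  rfl

theorem rho_rho (M : PersistenceModule K P) {p q w : P} (h1 : p ≤ q) (h2 : q ≤ w)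
    (h3 : p ≤ w) (v : M.obj p) :
    rho K M h2 (rho K M h1 v) = rho K M h3 v :=
  DFunLike.congr_fun (rho_comp K M h1 h2) v

theorem range_rho_le (M : PersistenceModule K P) {p q w : P} (h1 : p ≤ q) (h2 : q ≤ w)
    (h3 : p ≤ w) :
    LinearMap.range (rho K M h3) ≤ LinearMap.range (rho K M h2) := by
  rintro _ ⟨z, rfl⟩
  exact ⟨rho K M h1 z, rho_rho K M h1 h2 h3 z⟩

theorem ker_rho_le (M : PersistenceModule K P) {p q w : P} (h1 : p ≤ q) (h2 : q ≤ w)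
    (h3 : p ≤ w) :
    LinearMap.ker (rho K M h1) ≤ LinearMap.ker (rho K M h3) := by
  intro z hz
  rw [LinearMap.mem_ker] at hz ⊢
  rw [← rho_rho K M h1 h2 h3 z, hz, map_zero]

theorem exists_min_submodule {V : Type} [AddCommGroup V] [Module K V]
    [FiniteDimensional K V] {α : Type} (S : Set α) (hS : S.Nonempty)
    (f : α → Submodule K V)
    (hchain : ∀ a ∈ S, ∀ b ∈ S, f a ≤ f b ∨ f b ≤ f a) :
    ∃ a ∈ S, ∀ b ∈ S, f a ≤ f b := by
  have hT : ((fun a => Module.finrank K (f a)) '' S).Nonempty := hS.image _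
  obtain ⟨a, haS, ha⟩ := Nat.sInf_mem hT
  refine ⟨a, haS, fun b hb => ?_⟩
  rcases hchain a haS b hb with h | h
  · exact h
  · refine (Submodule.eq_of_le_of_finrank_le h ?_).ge
    exact ha.trans_le (Nat.sInf_le ⟨b, hb, rfl⟩)

theorem exists_max_submodule {V : Type} [AddCommGroup V] [Module K V]
    [FiniteDimensional K V] {α : Type} (S : Set α) (hS : S.Nonempty)
    (f : α → Submodule K V)
    (hchain : ∀ a ∈ S, ∀ b ∈ S, f a ≤ f b ∨ f b ≤ f a) :
    ∃ a ∈ S, ∀ b ∈ S, f b ≤ f a := by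
  have hT : ((fun a => Module.finrank K (f a)) '' S).Nonempty := hS.image _
  have hbdd : BddAbove ((fun a => Module.finrank K (f a)) '' S) := by
    refine ⟨Module.finrank K V, ?_⟩
    rintro _ ⟨c, _, rfl⟩
    exact Submodule.finrank_le (f c)
  obtain ⟨a, haS, ha⟩ := Nat.sSup_mem hT hbdd
  refine ⟨a, haS, fun b hb => ?_⟩
  rcases hchain a haS b hb with h | h
  · refine (Submodule.eq_of_le_of_finrank_le h ?_).ge
    exact (le_csSup hbdd ⟨b, hb, rfl⟩).trans ha.ge
  · exact h

end AuxBasic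

section AuxMap

theorem mem_range_of_factor (M : PersistenceModule K (X × Y)) {p q w : X × Y}
    (h1 : p ≤ q) (h2 : q ≤ w) (h3 : p ≤ w) (z : M.obj p) :
    rho K M h3 z ∈ LinearMap.range (rho K M h2) :=
  LinearMap.mem_range.mpr ⟨rho K M h1 z, rho_rho K M h1 h2 h3 z⟩

theorem map_ImPlusH_le (M : PersistenceModule K (X × Y)) (l : Cut X) {s u : X × Y}
    (h : s ≤ u) :
    Submodule.map (rho K M h) (ImPlusH K M l s) ≤ ImPlusH K M l u := by
  rintro _ ⟨w, hw, rfl⟩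
  rw [SetLike.mem_coe] at hw
  rw [ImPlusH, Submodule.mem_iInf]
  intro x
  rw [Submodule.mem_iInf]
  intro hx
  rcases le_total x s.1 with hxs | hsx
  · rw [ImPlusH, Submodule.mem_iInf] at hw
    have hw' := hw x
    rw [Submodule.mem_iInf] at hw'
    obtain ⟨z, hz⟩ := LinearMap.mem_range.mp (hw' ⟨hx.1, hxs⟩)
    rw [← hz, rho_rho K M (show ((x : X), s.2) ≤ s from ⟨hxs, le_rfl⟩) h
        (show ((x : X), s.2) ≤ u from ⟨hx.2, h.2⟩) z]
    exact mem_range_of_factor K M (show ((x : X), s.2) ≤ ((x : X), u.2) from ⟨le_rfl, h.2⟩)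
      _ _ z
  · exact mem_range_of_factor K M (show s ≤ ((x : X), u.2) from ⟨hsx, h.2⟩) _ h w

theorem map_ImPlusV_le (M : PersistenceModule K (X × Y)) (b : Cut Y) {s u : X × Y}
    (h : s ≤ u) :
    Submodule.map (rho K M h) (ImPlusV K M b s) ≤ ImPlusV K M b u := by
  rintro _ ⟨w, hw, rfl⟩
  rw [SetLike.mem_coe] at hw
  rw [ImPlusV, Submodule.mem_iInf]
  intro y
  rw [Submodule.mem_iInf]
  intro hy
  rcases le_total y s.2 with hys | hsy
  · rw [ImPlusV, Submodule.mem_iInf] at hw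
    have hw' := hw y
    rw [Submodule.mem_iInf] at hw'
    obtain ⟨z, hz⟩ := LinearMap.mem_range.mp (hw' ⟨hy.1, hys⟩)
    rw [← hz, rho_rho K M (show (s.1, (y : Y)) ≤ s from ⟨le_rfl, hys⟩) h
        (show (s.1, (y : Y)) ≤ u from ⟨h.1, hy.2⟩) z]
    exact mem_range_of_factor K M (show (s.1, (y : Y)) ≤ (u.1, (y : Y)) from ⟨h.1, le_rfl⟩)
      _ _ z
  · exact mem_range_of_factor K M (show s ≤ (u.1, (y : Y)) from ⟨h.1, hsy⟩) _ h w

theorem map_KerPlusH_le (M : PersistenceModule K (X × Y)) (r : Cut X) {s u : X × Y}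
    (h : s ≤ u) :
    Submodule.map (rho K M h) (KerPlusH K M r s) ≤ KerPlusH K M r u := by
  rintro _ ⟨w, hw, rfl⟩
  rw [SetLike.mem_coe] at hw
  rw [KerPlusH, Submodule.mem_iInf]
  intro x
  rw [Submodule.mem_iInf]
  intro hx
  rw [KerPlusH, Submodule.mem_iInf] at hw
  have hw' := hw x
  rw [Submodule.mem_iInf] at hw'
  have hk := hw' ⟨hx.1, h.1.trans hx.2⟩
  rw [LinearMap.mem_ker] at hk ⊢
  rw [rho_rho K M h (show u ≤ ((x : X), u.2) from ⟨hx.2, le_rfl⟩)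
      (show s ≤ ((x : X), u.2) from ⟨h.1.trans hx.2, h.2⟩) w,
    ← rho_rho K M (show s ≤ ((x : X), s.2) from ⟨h.1.trans hx.2, le_rfl⟩)
      (show ((x : X), s.2) ≤ ((x : X), u.2) from ⟨le_rfl, h.2⟩)
      (show s ≤ ((x : X), u.2) from ⟨h.1.trans hx.2, h.2⟩) w,
    hk, map_zero]

theorem map_KerPlusV_le (M : PersistenceModule K (X × Y)) (t : Cut Y) {s u : X × Y}
    (h : s ≤ u) :
    Submodule.map (rho K M h) (KerPlusV K M t s) ≤ KerPlusV K M t u := by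
  rintro _ ⟨w, hw, rfl⟩
  rw [SetLike.mem_coe] at hw
  rw [KerPlusV, Submodule.mem_iInf]
  intro y
  rw [Submodule.mem_iInf]
  intro hy
  rw [KerPlusV, Submodule.mem_iInf] at hw
  have hw' := hw y
  rw [Submodule.mem_iInf] at hw'
  have hk := hw' ⟨hy.1, h.2.trans hy.2⟩
  rw [LinearMap.mem_ker] at hk ⊢
  rw [rho_rho K M h (show u ≤ (u.1, (y : Y)) from ⟨le_rfl, hy.2⟩)
      (show s ≤ (u.1, (y : Y)) from ⟨h.1, h.2.trans hy.2⟩) w,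
    ← rho_rho K M (show s ≤ (s.1, (y : Y)) from ⟨le_rfl, h.2.trans hy.2⟩)
      (show (s.1, (y : Y)) ≤ (u.1, (y : Y)) from ⟨h.1, le_rfl⟩)
      (show s ≤ (u.1, (y : Y)) from ⟨h.1, h.2.trans hy.2⟩) w,
    hk, map_zero]

theorem map_KerMinusH_le (M : PersistenceModule K (X × Y)) (r : Cut X) {s u : X × Y}
    (h : s ≤ u) :
    Submodule.map (rho K M h) (KerMinusH K M r s) ≤ KerMinusH K M r u := by
  rw [KerMinusH, Submodule.map_iSup]
  refine iSup_le fun x => ?_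
  rw [Submodule.map_iSup]
  refine iSup_le fun hx => ?_
  rcases le_total u.1 x with hux | hxu
  · refine le_trans ?_ (le_iSup₂_of_le x ⟨hx.1, hux⟩ le_rfl)
    rintro _ ⟨w, hw, rfl⟩
    rw [SetLike.mem_coe] at hw
    rw [LinearMap.mem_ker] at hw ⊢
    rw [rho_rho K M h (show u ≤ ((x : X), u.2) from ⟨hux, le_rfl⟩)
        (show s ≤ ((x : X), u.2) from ⟨hx.2, h.2⟩) w,
      ← rho_rho K M (show s ≤ ((x : X), s.2) from ⟨hx.2, le_rfl⟩)
        (show ((x : X), s.2) ≤ ((x : X), u.2) from ⟨le_rfl, h.2⟩)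
        (show s ≤ ((x : X), u.2) from ⟨hx.2, h.2⟩) w,
      hw, map_zero]
  · rintro _ ⟨w, hw, rfl⟩
    rw [SetLike.mem_coe] at hw
    rw [LinearMap.mem_ker] at hw
    have hz : rho K M h w = 0 := by
      rw [← rho_rho K M (show s ≤ ((x : X), s.2) from ⟨hx.2, le_rfl⟩)
          (show ((x : X), s.2) ≤ u from ⟨hxu, h.2⟩) h w, hw, map_zero]
    rw [hz]
    exact zero_mem _

theorem map_KerMinusV_le (M : PersistenceModule K (X × Y)) (t : Cut Y) {s u : X × Y}
    (h : s ≤ u) :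
    Submodule.map (rho K M h) (KerMinusV K M t s) ≤ KerMinusV K M t u := by
  rw [KerMinusV, Submodule.map_iSup]
  refine iSup_le fun y => ?_
  rw [Submodule.map_iSup]
  refine iSup_le fun hy => ?_
  rcases le_total u.2 y with huy | hyu
  · refine le_trans ?_ (le_iSup₂_of_le y ⟨hy.1, huy⟩ le_rfl)
    rintro _ ⟨w, hw, rfl⟩
    rw [SetLike.mem_coe] at hw
    rw [LinearMap.mem_ker] at hw ⊢
    rw [rho_rho K M h (show u ≤ (u.1, (y : Y)) from ⟨le_rfl, huy⟩)
        (show s ≤ (u.1, (y : Y)) from ⟨h.1, hy.2⟩) w,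
      ← rho_rho K M (show s ≤ (s.1, (y : Y)) from ⟨le_rfl, hy.2⟩)
        (show (s.1, (y : Y)) ≤ (u.1, (y : Y)) from ⟨h.1, le_rfl⟩)
        (show s ≤ (u.1, (y : Y)) from ⟨h.1, hy.2⟩) w,
      hw, map_zero]
  · rintro _ ⟨w, hw, rfl⟩
    rw [SetLike.mem_coe] at hw
    rw [LinearMap.mem_ker] at hw
    have hz : rho K M h w = 0 := by
      rw [← rho_rho K M (show s ≤ (s.1, (y : Y)) from ⟨le_rfl, hy.2⟩)
          (show (s.1, (y : Y)) ≤ u from ⟨h.1, hyu⟩) h w, hw, map_zero]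
    rw [hz]
    exact zero_mem _

theorem map_VplusAt_le (M : PersistenceModule K (X × Y)) (l r : Cut X) (b t : Cut Y)
    {s u : X × Y} (h : s ≤ u) :
    Submodule.map (rho K M h) (VplusAt K M l r b t s) ≤ VplusAt K M l r b t u := by
  rw [VplusAt, VplusAt, ImPlusR, ImPlusR, KerPlusR, KerPlusR]
  refine le_inf (le_inf ?_ ?_) (le_inf ?_ ?_)
  · exact le_trans (Submodule.map_mono (le_trans inf_le_left inf_le_left))
      (map_ImPlusH_le K M l h)
  · exact le_trans (Submodule.map_mono (le_trans inf_le_left inf_le_right))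
      (map_ImPlusV_le K M b h)
  · refine le_trans (Submodule.map_mono (le_trans inf_le_right inf_le_left)) ?_
    rw [Submodule.map_sup]
    exact sup_le (le_trans (map_KerPlusH_le K M r h) le_sup_left)
      (le_trans (map_KerMinusV_le K M t h) le_sup_right)
  · refine le_trans (Submodule.map_mono (le_trans inf_le_right inf_le_right)) ?_
    rw [Submodule.map_sup]
    exact sup_le (le_trans (map_KerMinusH_le K M r h) le_sup_left)
      (le_trans (map_KerPlusV_le K M t h) le_sup_right)

theorem VplusSub_eq_VplusAt (M : PersistenceModule K (X × Y)) (l r : Cut X) (b t : Cut Y)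
    {u : X × Y} (hu : u ∈ rectOf l r b t) :
    VplusSub K M l r b t u = VplusAt K M l r b t u := by
  refine le_antisymm (iSup₂_le fun s hs => map_VplusAt_le K M l r b t hs.2) ?_
  refine le_trans ?_ (le_iSup₂_of_le u ⟨hu, le_rfl⟩ le_rfl)
  intro v hv
  exact ⟨v, hv, DFunLike.congr_fun (rho_refl K M u) v⟩

theorem VplusSub_eq_bot (M : PersistenceModule K (X × Y)) (l r : Cut X) (b t : Cut Y)
    {w : X × Y} (hw : ∀ s ∈ rectOf l r b t, ¬ s ≤ w) :
    VplusSub K M l r b t w = ⊥ :=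
  le_bot_iff.mp (iSup₂_le fun s hs => (hw s hs.1 hs.2).elim)

end AuxMap

section AuxSurj

theorem surjH (M : PersistenceModule K (X × Y)) (hM : Pfd K M) (hwe : WeaklyExact K M)
    (l r : Cut X) (b t : Cut Y) {u : X × Y} (hu : u ∈ rectOf l r b t)
    {x₀ : X} (hx₀l : x₀ ∈ l.upper) (hx₀u : x₀ ≤ u.1) {v : M.obj u}
    (hv : v ∈ VplusAt K M l r b t u) :
    ∃ w ∈ VplusAt K M l r b t (x₀, u.2),
      rho K M (show ((x₀ : X), u.2) ≤ u from ⟨hx₀u, le_rfl⟩) w = v := by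
  haveI := hM u
  haveI := hM (x₀, u.2)
  obtain ⟨⟨hu1l, hu1r⟩, hu2b, hu2t⟩ := hu
  rw [VplusAt, ImPlusR, KerPlusR, Submodule.mem_inf, Submodule.mem_inf,
    Submodule.mem_inf] at hv
  obtain ⟨⟨hv1, hv2⟩, hv3, hv4⟩ := hv
  obtain ⟨⟨x₁, hx₁l, hx₁x₀⟩, -, hx₁min⟩ :=
    exists_min_submodule K (Set.univ : Set {x : X // x ∈ l.upper ∧ x ≤ x₀})
      ⟨⟨x₀, hx₀l, le_rfl⟩, Set.mem_univ _⟩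
      (fun a => LinearMap.range (rho K M
        (show ((a.1 : X), u.2) ≤ ((x₀ : X), u.2) from ⟨a.2.2, le_rfl⟩)))
      (fun a _ c _ => by
        rcases le_total a.1 c.1 with hac | hca
        · exact Or.inl (range_rho_le K M
            (show ((a.1 : X), u.2) ≤ ((c.1 : X), u.2) from ⟨hac, le_rfl⟩) _ _)
        · exact Or.inr (range_rho_le K M
            (show ((c.1 : X), u.2) ≤ ((a.1 : X), u.2) from ⟨hca, le_rfl⟩) _ _))
  obtain ⟨⟨y₁, hy₁b, hy₁u2⟩, -, hy₁min⟩ :=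
    exists_min_submodule K (Set.univ : Set {y : Y // y ∈ b.upper ∧ y ≤ u.2})
      ⟨⟨u.2, hu2b, le_rfl⟩, Set.mem_univ _⟩
      (fun a => LinearMap.range (rho K M
        (show ((x₀ : X), (a.1 : Y)) ≤ ((x₀ : X), u.2) from ⟨le_rfl, a.2.2⟩)))
      (fun a _ c _ => by
        rcases le_total a.1 c.1 with hac | hca
        · exact Or.inl (range_rho_le K M
            (show ((x₀ : X), (a.1 : Y)) ≤ ((x₀ : X), (c.1 : Y)) from ⟨le_rfl, hac⟩) _ _)
        · exact Or.inr (range_rho_le K M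
            (show ((x₀ : X), (c.1 : Y)) ≤ ((x₀ : X), (a.1 : Y)) from ⟨le_rfl, hca⟩) _ _))
  have hx₁u : x₁ ≤ u.1 := hx₁x₀.trans hx₀u
  have hvl : v ∈ LinearMap.range (rho K M
      (show ((x₁ : X), u.2) ≤ u from ⟨hx₁u, le_rfl⟩)) := by
    rw [ImPlusH, Submodule.mem_iInf] at hv1
    have h := hv1 x₁
    rw [Submodule.mem_iInf] at h
    exact h ⟨hx₁l, hx₁u⟩
  have hvb : v ∈ LinearMap.range (rho K M
      (show (u.1, (y₁ : Y)) ≤ u from ⟨le_rfl, hy₁u2⟩)) := by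
    rw [ImPlusV, Submodule.mem_iInf] at hv2
    have h := hv2 y₁
    rw [Submodule.mem_iInf] at h
    exact h ⟨hy₁b, hy₁u2⟩
  have hAu : ((x₁ : X), (y₁ : Y)) ≤ u := ⟨hx₁u, hy₁u2⟩
  have hvz : v ∈ LinearMap.range (rho K M hAu) := by
    rw [(hwe (x₁, y₁) u hAu).1]
    exact Submodule.mem_inf.mpr ⟨hvb, hvl⟩
  obtain ⟨z, hz⟩ := LinearMap.mem_range.mp hvz
  have hAs : ((x₁ : X), (y₁ : Y)) ≤ ((x₀ : X), u.2) := ⟨hx₁x₀, hy₁u2⟩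
  have hsu : ((x₀ : X), u.2) ≤ u := ⟨hx₀u, le_rfl⟩
  refine ⟨rho K M hAs z, ?_, ?_⟩
  swap
  · rw [rho_rho K M hAs hsu hAu z, hz]
  rw [VplusAt, ImPlusR, KerPlusR, Submodule.mem_inf, Submodule.mem_inf,
    Submodule.mem_inf]
  refine ⟨⟨?_, ?_⟩, ?_, ?_⟩
  · -- ImPlusH at s
    rw [ImPlusH, Submodule.mem_iInf]
    intro x
    rw [Submodule.mem_iInf]
    intro hx
    refine hx₁min ⟨x, hx⟩ (Set.mem_univ _) ?_
    exact mem_range_of_factor K M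
      (show ((x₁ : X), (y₁ : Y)) ≤ ((x₁ : X), u.2) from ⟨le_rfl, hy₁u2⟩)
      (show ((x₁ : X), u.2) ≤ ((x₀ : X), u.2) from ⟨hx₁x₀, le_rfl⟩) hAs z
  · -- ImPlusV at s
    rw [ImPlusV, Submodule.mem_iInf]
    intro y
    rw [Submodule.mem_iInf]
    intro hy
    refine hy₁min ⟨y, hy⟩ (Set.mem_univ _) ?_
    exact mem_range_of_factor K M
      (show ((x₁ : X), (y₁ : Y)) ≤ ((x₀ : X), (y₁ : Y)) from ⟨hx₁x₀, le_rfl⟩)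
      (show ((x₀ : X), (y₁ : Y)) ≤ ((x₀ : X), u.2) from ⟨le_rfl, hy₁u2⟩) hAs z
  · -- KerPlusH ⊔ KerMinusV at s
    by_cases hrup : ∃ x, x ∈ r.upper
    case neg =>
      refine Submodule.mem_sup_left ?_
      rw [KerPlusH, Submodule.mem_iInf]
      intro x
      rw [Submodule.mem_iInf]
      intro hx
      exact absurd ⟨x, hx.1⟩ hrup
    case pos =>
      obtain ⟨⟨y₂, hy₂t, hy₂u2⟩, -, hy₂max⟩ :=
        exists_max_submodule K (Set.univ : Set {y : Y // y ∈ t.lower ∧ u.2 ≤ y})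
          ⟨⟨u.2, hu2t, le_rfl⟩, Set.mem_univ _⟩
          (fun a => LinearMap.ker (rho K M
            (show u ≤ (u.1, (a.1 : Y)) from ⟨le_rfl, a.2.2⟩)))
          (fun a _ c _ => by
            rcases le_total a.1 c.1 with hac | hca
            · exact Or.inl (ker_rho_le K M _
                (show (u.1, (a.1 : Y)) ≤ (u.1, (c.1 : Y)) from ⟨le_rfl, hac⟩) _)
            · exact Or.inr (ker_rho_le K M _
                (show (u.1, (c.1 : Y)) ≤ (u.1, (a.1 : Y)) from ⟨le_rfl, hca⟩) _))
      obtain ⟨⟨x₃, hx₃r⟩, -, hx₃min⟩ :=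
        exists_min_submodule K (Set.univ : Set {x : X // x ∈ r.upper})
          ⟨⟨hrup.choose, hrup.choose_spec⟩, Set.mem_univ _⟩
          (fun a => LinearMap.ker (rho K M
            (show u ≤ ((a.1 : X), u.2) from ⟨(r.lt u.1 hu1r a.1 a.2).le, le_rfl⟩)))
          (fun a _ c _ => by
            rcases le_total a.1 c.1 with hac | hca
            · exact Or.inl (ker_rho_le K M _
                (show ((a.1 : X), u.2) ≤ ((c.1 : X), u.2) from ⟨hac, le_rfl⟩) _)
            · exact Or.inr (ker_rho_le K M _
                (show ((c.1 : X), u.2) ≤ ((a.1 : X), u.2) from ⟨hca, le_rfl⟩) _))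
      have hx₃u1 : u.1 ≤ x₃ := (r.lt u.1 hu1r x₃ hx₃r).le
      have hcor : u ≤ ((x₃ : X), (y₂ : Y)) := ⟨hx₃u1, hy₂u2⟩
      have hvk : rho K M hcor v = 0 := by
        have h1 : KerPlusH K M r u ≤ LinearMap.ker (rho K M hcor) := by
          refine le_trans ?_ (ker_rho_le K M
            (show u ≤ ((x₃ : X), u.2) from ⟨hx₃u1, le_rfl⟩)
            (show ((x₃ : X), u.2) ≤ ((x₃ : X), (y₂ : Y)) from ⟨le_rfl, hy₂u2⟩) hcor)
          rw [KerPlusH]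
          exact iInf₂_le x₃ ⟨hx₃r, hx₃u1⟩
        have h2 : KerMinusV K M t u ≤ LinearMap.ker (rho K M hcor) := by
          rw [KerMinusV]
          refine iSup₂_le fun y hy => le_trans (hy₂max ⟨y, hy⟩ (Set.mem_univ _)) ?_
          exact ker_rho_le K M (show u ≤ (u.1, (y₂ : Y)) from ⟨le_rfl, hy₂u2⟩)
            (show (u.1, (y₂ : Y)) ≤ ((x₃ : X), (y₂ : Y)) from ⟨hx₃u1, le_rfl⟩) hcor
        exact LinearMap.mem_ker.mp ((sup_le h1 h2) hv3)
      have hscor : ((x₀ : X), u.2) ≤ ((x₃ : X), (y₂ : Y)) := ⟨hx₀u.trans hx₃u1, hy₂u2⟩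
      have hwk : rho K M hscor (rho K M hAs z) = 0 := by
        rw [rho_rho K M hAs hscor (show ((x₁ : X), (y₁ : Y)) ≤ ((x₃ : X), (y₂ : Y)) from
            ⟨hx₁u.trans hx₃u1, hy₁u2.trans hy₂u2⟩) z,
          ← rho_rho K M hAu hcor (show ((x₁ : X), (y₁ : Y)) ≤ ((x₃ : X), (y₂ : Y)) from
            ⟨hx₁u.trans hx₃u1, hy₁u2.trans hy₂u2⟩) z, hz, hvk]
      have hmem : rho K M hAs z ∈ LinearMap.ker (rho K M hscor) :=
        LinearMap.mem_ker.mpr hwk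
      rw [(hwe ((x₀ : X), u.2) ((x₃ : X), (y₂ : Y)) hscor).2] at hmem
      have ha : LinearMap.ker (rho K M (show ((x₀ : X), u.2) ≤ ((x₃ : X), u.2) from
          ⟨hscor.1, le_rfl⟩)) ≤ KerPlusH K M r ((x₀ : X), u.2) := by
        rw [KerPlusH]
        refine le_iInf fun x => le_iInf fun hx => ?_
        intro w' hw'
        rw [LinearMap.mem_ker] at hw' ⊢
        have hxu1 : u.1 ≤ x := (r.lt u.1 hu1r x hx.1).le
        have hmem2 : rho K M hsu w' ∈ LinearMap.ker (rho K M
            (show u ≤ ((x₃ : X), u.2) from ⟨hx₃u1, le_rfl⟩)) := by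
          rw [LinearMap.mem_ker, rho_rho K M hsu
            (show u ≤ ((x₃ : X), u.2) from ⟨hx₃u1, le_rfl⟩)
            (show ((x₀ : X), u.2) ≤ ((x₃ : X), u.2) from ⟨hx₀u.trans hx₃u1, le_rfl⟩) w']
          exact hw'
        have hmem3 := hx₃min ⟨x, hx.1⟩ (Set.mem_univ _) hmem2
        rw [LinearMap.mem_ker] at hmem3
        rw [← rho_rho K M hsu (show u ≤ ((x : X), u.2) from ⟨hxu1, le_rfl⟩)
          (show ((x₀ : X), u.2) ≤ ((x : X), u.2) from ⟨hx₀u.trans hxu1, le_rfl⟩) w']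
        exact hmem3
      have hb : LinearMap.ker (rho K M (show ((x₀ : X), u.2) ≤ ((x₀ : X), (y₂ : Y)) from
          ⟨le_rfl, hscor.2⟩)) ≤ KerMinusV K M t ((x₀ : X), u.2) := by
        rw [KerMinusV]
        exact le_iSup₂_of_le y₂ ⟨hy₂t, hy₂u2⟩ le_rfl
      exact sup_le_sup ha hb hmem
  · -- KerMinusH ⊔ KerPlusV at s
    by_cases htup : ∃ y, y ∈ t.upper
    case neg =>
      refine Submodule.mem_sup_right ?_
      rw [KerPlusV, Submodule.mem_iInf]
      intro y
      rw [Submodule.mem_iInf]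
      intro hy
      exact absurd ⟨y, hy.1⟩ htup
    case pos =>
      obtain ⟨⟨x₂, hx₂r, hx₂u1⟩, -, hx₂max⟩ :=
        exists_max_submodule K (Set.univ : Set {x : X // x ∈ r.lower ∧ u.1 ≤ x})
          ⟨⟨u.1, hu1r, le_rfl⟩, Set.mem_univ _⟩
          (fun a => LinearMap.ker (rho K M
            (show u ≤ ((a.1 : X), u.2) from ⟨a.2.2, le_rfl⟩)))
          (fun a _ c _ => by
            rcases le_total a.1 c.1 with hac | hca
            · exact Or.inl (ker_rho_le K M _
                (show ((a.1 : X), u.2) ≤ ((c.1 : X), u.2) from ⟨hac, le_rfl⟩) _)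
            · exact Or.inr (ker_rho_le K M _
                (show ((c.1 : X), u.2) ≤ ((a.1 : X), u.2) from ⟨hca, le_rfl⟩) _))
      obtain ⟨⟨y₃, hy₃t⟩, -, hy₃min⟩ :=
        exists_min_submodule K (Set.univ : Set {y : Y // y ∈ t.upper})
          ⟨⟨htup.choose, htup.choose_spec⟩, Set.mem_univ _⟩
          (fun a => LinearMap.ker (rho K M
            (show ((x₀ : X), u.2) ≤ ((x₀ : X), (a.1 : Y)) from
              ⟨le_rfl, (t.lt u.2 hu2t a.1 a.2).le⟩)))
          (fun a _ c _ => by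
            rcases le_total a.1 c.1 with hac | hca
            · exact Or.inl (ker_rho_le K M _
                (show ((x₀ : X), (a.1 : Y)) ≤ ((x₀ : X), (c.1 : Y)) from ⟨le_rfl, hac⟩) _)
            · exact Or.inr (ker_rho_le K M _
                (show ((x₀ : X), (c.1 : Y)) ≤ ((x₀ : X), (a.1 : Y)) from ⟨le_rfl, hca⟩) _))
      have hy₃u2 : u.2 ≤ y₃ := (t.lt u.2 hu2t y₃ hy₃t).le
      have hcor : u ≤ ((x₂ : X), (y₃ : Y)) := ⟨hx₂u1, hy₃u2⟩
      have hvk : rho K M hcor v = 0 := by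
        have h1 : KerMinusH K M r u ≤ LinearMap.ker (rho K M hcor) := by
          rw [KerMinusH]
          refine iSup₂_le fun x hx => le_trans (hx₂max ⟨x, hx⟩ (Set.mem_univ _)) ?_
          exact ker_rho_le K M (show u ≤ ((x₂ : X), u.2) from ⟨hx₂u1, le_rfl⟩)
            (show ((x₂ : X), u.2) ≤ ((x₂ : X), (y₃ : Y)) from ⟨le_rfl, hy₃u2⟩) hcor
        have h2 : KerPlusV K M t u ≤ LinearMap.ker (rho K M hcor) := by
          refine le_trans ?_ (ker_rho_le K M
            (show u ≤ (u.1, (y₃ : Y)) from ⟨le_rfl, hy₃u2⟩)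
            (show (u.1, (y₃ : Y)) ≤ ((x₂ : X), (y₃ : Y)) from ⟨hx₂u1, le_rfl⟩) hcor)
          rw [KerPlusV]
          exact iInf₂_le y₃ ⟨hy₃t, hy₃u2⟩
        exact LinearMap.mem_ker.mp ((sup_le h1 h2) hv4)
      have hscor : ((x₀ : X), u.2) ≤ ((x₂ : X), (y₃ : Y)) := ⟨hx₀u.trans hx₂u1, hy₃u2⟩
      have hwk : rho K M hscor (rho K M hAs z) = 0 := by
        rw [rho_rho K M hAs hscor (show ((x₁ : X), (y₁ : Y)) ≤ ((x₂ : X), (y₃ : Y)) from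
            ⟨hx₁u.trans hx₂u1, hy₁u2.trans hy₃u2⟩) z,
          ← rho_rho K M hAu hcor (show ((x₁ : X), (y₁ : Y)) ≤ ((x₂ : X), (y₃ : Y)) from
            ⟨hx₁u.trans hx₂u1, hy₁u2.trans hy₃u2⟩) z, hz, hvk]
      have hmem : rho K M hAs z ∈ LinearMap.ker (rho K M hscor) :=
        LinearMap.mem_ker.mpr hwk
      rw [(hwe ((x₀ : X), u.2) ((x₂ : X), (y₃ : Y)) hscor).2] at hmem
      have ha : LinearMap.ker (rho K M (show ((x₀ : X), u.2) ≤ ((x₂ : X), u.2) from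
          ⟨hscor.1, le_rfl⟩)) ≤ KerMinusH K M r ((x₀ : X), u.2) := by
        rw [KerMinusH]
        exact le_iSup₂_of_le x₂ ⟨hx₂r, hx₀u.trans hx₂u1⟩ le_rfl
      have hb : LinearMap.ker (rho K M (show ((x₀ : X), u.2) ≤ ((x₀ : X), (y₃ : Y)) from
          ⟨le_rfl, hscor.2⟩)) ≤ KerPlusV K M t ((x₀ : X), u.2) := by
        rw [KerPlusV]
        exact le_iInf fun y => le_iInf fun hy => hy₃min ⟨y, hy.1⟩ (Set.mem_univ _)
      exact sup_le_sup ha hb hmem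

end AuxSurj

theorem surjV (M : PersistenceModule K (X × Y)) (hM : Pfd K M) (hwe : WeaklyExact K M)
    (l r : Cut X) (b t : Cut Y) {u : X × Y} (hu : u ∈ rectOf l r b t)
    {y₀ : Y} (hy₀b : y₀ ∈ b.upper) (hy₀u : y₀ ≤ u.2) {v : M.obj u}
    (hv : v ∈ VplusAt K M l r b t u) :
    ∃ w ∈ VplusAt K M l r b t (u.1, y₀),
      rho K M (show (u.1, (y₀ : Y)) ≤ u from ⟨le_rfl, hy₀u⟩) w = v := by
  haveI := hM u
  haveI := hM (u.1, y₀)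
  obtain ⟨⟨hu1l, hu1r⟩, hu2b, hu2t⟩ := hu
  rw [VplusAt, ImPlusR, KerPlusR, Submodule.mem_inf, Submodule.mem_inf,
    Submodule.mem_inf] at hv
  obtain ⟨⟨hv1, hv2⟩, hv3, hv4⟩ := hv
  obtain ⟨⟨x₁, hx₁l, hx₁u1⟩, -, hx₁min⟩ :=
    exists_min_submodule K (Set.univ : Set {x : X // x ∈ l.upper ∧ x ≤ u.1})
      ⟨⟨u.1, hu1l, le_rfl⟩, Set.mem_univ _⟩
      (fun a => LinearMap.range (rho K M
        (show ((a.1 : X), (y₀ : Y)) ≤ (u.1, (y₀ : Y)) from ⟨a.2.2, le_rfl⟩)))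
      (fun a _ c _ => by
        rcases le_total a.1 c.1 with hac | hca
        · exact Or.inl (range_rho_le K M
            (show ((a.1 : X), (y₀ : Y)) ≤ ((c.1 : X), (y₀ : Y)) from ⟨hac, le_rfl⟩) _ _)
        · exact Or.inr (range_rho_le K M
            (show ((c.1 : X), (y₀ : Y)) ≤ ((a.1 : X), (y₀ : Y)) from ⟨hca, le_rfl⟩) _ _))
  obtain ⟨⟨y₁, hy₁b, hy₁y₀⟩, -, hy₁min⟩ :=
    exists_min_submodule K (Set.univ : Set {y : Y // y ∈ b.upper ∧ y ≤ y₀})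
      ⟨⟨y₀, hy₀b, le_rfl⟩, Set.mem_univ _⟩
      (fun a => LinearMap.range (rho K M
        (show (u.1, (a.1 : Y)) ≤ (u.1, (y₀ : Y)) from ⟨le_rfl, a.2.2⟩)))
      (fun a _ c _ => by
        rcases le_total a.1 c.1 with hac | hca
        · exact Or.inl (range_rho_le K M
            (show (u.1, (a.1 : Y)) ≤ (u.1, (c.1 : Y)) from ⟨le_rfl, hac⟩) _ _)
        · exact Or.inr (range_rho_le K M
            (show (u.1, (c.1 : Y)) ≤ (u.1, (a.1 : Y)) from ⟨le_rfl, hca⟩) _ _))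
  have hy₁u2 : y₁ ≤ u.2 := hy₁y₀.trans hy₀u
  have hvl : v ∈ LinearMap.range (rho K M
      (show ((x₁ : X), u.2) ≤ u from ⟨hx₁u1, le_rfl⟩)) := by
    rw [ImPlusH, Submodule.mem_iInf] at hv1
    have h := hv1 x₁
    rw [Submodule.mem_iInf] at h
    exact h ⟨hx₁l, hx₁u1⟩
  have hvb : v ∈ LinearMap.range (rho K M
      (show (u.1, (y₁ : Y)) ≤ u from ⟨le_rfl, hy₁u2⟩)) := by
    rw [ImPlusV, Submodule.mem_iInf] at hv2
    have h := hv2 y₁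
    rw [Submodule.mem_iInf] at h
    exact h ⟨hy₁b, hy₁u2⟩
  have hAu : ((x₁ : X), (y₁ : Y)) ≤ u := ⟨hx₁u1, hy₁u2⟩
  have hvz : v ∈ LinearMap.range (rho K M hAu) := by
    rw [(hwe (x₁, y₁) u hAu).1]
    exact Submodule.mem_inf.mpr ⟨hvb, hvl⟩
  obtain ⟨z, hz⟩ := LinearMap.mem_range.mp hvz
  have hAs : ((x₁ : X), (y₁ : Y)) ≤ (u.1, (y₀ : Y)) := ⟨hx₁u1, hy₁y₀⟩
  have hsu : (u.1, (y₀ : Y)) ≤ u := ⟨le_rfl, hy₀u⟩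
  refine ⟨rho K M hAs z, ?_, ?_⟩
  swap
  · rw [rho_rho K M hAs hsu hAu z, hz]
  rw [VplusAt, ImPlusR, KerPlusR, Submodule.mem_inf, Submodule.mem_inf,
    Submodule.mem_inf]
  refine ⟨⟨?_, ?_⟩, ?_, ?_⟩
  · -- ImPlusH at s
    rw [ImPlusH, Submodule.mem_iInf]
    intro x
    rw [Submodule.mem_iInf]
    intro hx
    refine hx₁min ⟨x, hx⟩ (Set.mem_univ _) ?_
    exact mem_range_of_factor K M
      (show ((x₁ : X), (y₁ : Y)) ≤ ((x₁ : X), (y₀ : Y)) from ⟨le_rfl, hy₁y₀⟩)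
      (show ((x₁ : X), (y₀ : Y)) ≤ (u.1, (y₀ : Y)) from ⟨hx₁u1, le_rfl⟩) hAs z
  · -- ImPlusV at s
    rw [ImPlusV, Submodule.mem_iInf]
    intro y
    rw [Submodule.mem_iInf]
    intro hy
    refine hy₁min ⟨y, hy⟩ (Set.mem_univ _) ?_
    exact mem_range_of_factor K M
      (show ((x₁ : X), (y₁ : Y)) ≤ (u.1, (y₁ : Y)) from ⟨hx₁u1, le_rfl⟩)
      (show (u.1, (y₁ : Y)) ≤ (u.1, (y₀ : Y)) from ⟨le_rfl, hy₁y₀⟩) hAs z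
  · -- KerPlusH ⊔ KerMinusV at s
    by_cases hrup : ∃ x, x ∈ r.upper
    case neg =>
      refine Submodule.mem_sup_left ?_
      rw [KerPlusH, Submodule.mem_iInf]
      intro x
      rw [Submodule.mem_iInf]
      intro hx
      exact absurd ⟨x, hx.1⟩ hrup
    case pos =>
      obtain ⟨⟨y₂, hy₂t, hy₂u2⟩, -, hy₂max⟩ :=
        exists_max_submodule K (Set.univ : Set {y : Y // y ∈ t.lower ∧ u.2 ≤ y})
          ⟨⟨u.2, hu2t, le_rfl⟩, Set.mem_univ _⟩
          (fun a => LinearMap.ker (rho K M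
            (show u ≤ (u.1, (a.1 : Y)) from ⟨le_rfl, a.2.2⟩)))
          (fun a _ c _ => by
            rcases le_total a.1 c.1 with hac | hca
            · exact Or.inl (ker_rho_le K M _
                (show (u.1, (a.1 : Y)) ≤ (u.1, (c.1 : Y)) from ⟨le_rfl, hac⟩) _)
            · exact Or.inr (ker_rho_le K M _
                (show (u.1, (c.1 : Y)) ≤ (u.1, (a.1 : Y)) from ⟨le_rfl, hca⟩) _))
      obtain ⟨⟨x₃, hx₃r⟩, -, hx₃min⟩ :=
        exists_min_submodule K (Set.univ : Set {x : X // x ∈ r.upper})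
          ⟨⟨hrup.choose, hrup.choose_spec⟩, Set.mem_univ _⟩
          (fun a => LinearMap.ker (rho K M
            (show (u.1, (y₀ : Y)) ≤ ((a.1 : X), (y₀ : Y)) from
              ⟨(r.lt u.1 hu1r a.1 a.2).le, le_rfl⟩)))
          (fun a _ c _ => by
            rcases le_total a.1 c.1 with hac | hca
            · exact Or.inl (ker_rho_le K M _
                (show ((a.1 : X), (y₀ : Y)) ≤ ((c.1 : X), (y₀ : Y)) from ⟨hac, le_rfl⟩) _)
            · exact Or.inr (ker_rho_le K M _
                (show ((c.1 : X), (y₀ : Y)) ≤ ((a.1 : X), (y₀ : Y)) from ⟨hca, le_rfl⟩) _))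
      have hx₃u1 : u.1 ≤ x₃ := (r.lt u.1 hu1r x₃ hx₃r).le
      have hcor : u ≤ ((x₃ : X), (y₂ : Y)) := ⟨hx₃u1, hy₂u2⟩
      have hvk : rho K M hcor v = 0 := by
        have h1 : KerPlusH K M r u ≤ LinearMap.ker (rho K M hcor) := by
          refine le_trans ?_ (ker_rho_le K M
            (show u ≤ ((x₃ : X), u.2) from ⟨hx₃u1, le_rfl⟩)
            (show ((x₃ : X), u.2) ≤ ((x₃ : X), (y₂ : Y)) from ⟨le_rfl, hy₂u2⟩) hcor)
          rw [KerPlusH]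
          exact iInf₂_le x₃ ⟨hx₃r, hx₃u1⟩
        have h2 : KerMinusV K M t u ≤ LinearMap.ker (rho K M hcor) := by
          rw [KerMinusV]
          refine iSup₂_le fun y hy => le_trans (hy₂max ⟨y, hy⟩ (Set.mem_univ _)) ?_
          exact ker_rho_le K M (show u ≤ (u.1, (y₂ : Y)) from ⟨le_rfl, hy₂u2⟩)
            (show (u.1, (y₂ : Y)) ≤ ((x₃ : X), (y₂ : Y)) from ⟨hx₃u1, le_rfl⟩) hcor
        exact LinearMap.mem_ker.mp ((sup_le h1 h2) hv3)
      have hscor : (u.1, (y₀ : Y)) ≤ ((x₃ : X), (y₂ : Y)) := ⟨hx₃u1, hy₀u.trans hy₂u2⟩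
      have hwk : rho K M hscor (rho K M hAs z) = 0 := by
        rw [rho_rho K M hAs hscor (show ((x₁ : X), (y₁ : Y)) ≤ ((x₃ : X), (y₂ : Y)) from
            ⟨hx₁u1.trans hx₃u1, hy₁u2.trans hy₂u2⟩) z,
          ← rho_rho K M hAu hcor (show ((x₁ : X), (y₁ : Y)) ≤ ((x₃ : X), (y₂ : Y)) from
            ⟨hx₁u1.trans hx₃u1, hy₁u2.trans hy₂u2⟩) z, hz, hvk]
      have hmem : rho K M hAs z ∈ LinearMap.ker (rho K M hscor) :=
        LinearMap.mem_ker.mpr hwk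
      rw [(hwe (u.1, (y₀ : Y)) ((x₃ : X), (y₂ : Y)) hscor).2] at hmem
      have ha : LinearMap.ker (rho K M (show (u.1, (y₀ : Y)) ≤ ((x₃ : X), (y₀ : Y)) from
          ⟨hscor.1, le_rfl⟩)) ≤ KerPlusH K M r (u.1, (y₀ : Y)) := by
        rw [KerPlusH]
        exact le_iInf fun x => le_iInf fun hx => hx₃min ⟨x, hx.1⟩ (Set.mem_univ _)
      have hb : LinearMap.ker (rho K M (show (u.1, (y₀ : Y)) ≤ (u.1, (y₂ : Y)) from
          ⟨le_rfl, hscor.2⟩)) ≤ KerMinusV K M t (u.1, (y₀ : Y)) := by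
        rw [KerMinusV]
        exact le_iSup₂_of_le y₂ ⟨hy₂t, hy₀u.trans hy₂u2⟩ le_rfl
      exact sup_le_sup ha hb hmem
  · -- KerMinusH ⊔ KerPlusV at s
    by_cases htup : ∃ y, y ∈ t.upper
    case neg =>
      refine Submodule.mem_sup_right ?_
      rw [KerPlusV, Submodule.mem_iInf]
      intro y
      rw [Submodule.mem_iInf]
      intro hy
      exact absurd ⟨y, hy.1⟩ htup
    case pos =>
      obtain ⟨⟨x₂, hx₂r, hx₂u1⟩, -, hx₂max⟩ :=
        exists_max_submodule K (Set.univ : Set {x : X // x ∈ r.lower ∧ u.1 ≤ x})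
          ⟨⟨u.1, hu1r, le_rfl⟩, Set.mem_univ _⟩
          (fun a => LinearMap.ker (rho K M
            (show u ≤ ((a.1 : X), u.2) from ⟨a.2.2, le_rfl⟩)))
          (fun a _ c _ => by
            rcases le_total a.1 c.1 with hac | hca
            · exact Or.inl (ker_rho_le K M _
                (show ((a.1 : X), u.2) ≤ ((c.1 : X), u.2) from ⟨hac, le_rfl⟩) _)
            · exact Or.inr (ker_rho_le K M _
                (show ((c.1 : X), u.2) ≤ ((a.1 : X), u.2) from ⟨hca, le_rfl⟩) _))
      obtain ⟨⟨y₃, hy₃t⟩, -, hy₃min⟩ :=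
        exists_min_submodule K (Set.univ : Set {y : Y // y ∈ t.upper})
          ⟨⟨htup.choose, htup.choose_spec⟩, Set.mem_univ _⟩
          (fun a => LinearMap.ker (rho K M
            (show u ≤ (u.1, (a.1 : Y)) from ⟨le_rfl, (t.lt u.2 hu2t a.1 a.2).le⟩)))
          (fun a _ c _ => by
            rcases le_total a.1 c.1 with hac | hca
            · exact Or.inl (ker_rho_le K M _
                (show (u.1, (a.1 : Y)) ≤ (u.1, (c.1 : Y)) from ⟨le_rfl, hac⟩) _)
            · exact Or.inr (ker_rho_le K M _
                (show (u.1, (c.1 : Y)) ≤ (u.1, (a.1 : Y)) from ⟨le_rfl, hca⟩) _))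
      have hy₃u2 : u.2 ≤ y₃ := (t.lt u.2 hu2t y₃ hy₃t).le
      have hcor : u ≤ ((x₂ : X), (y₃ : Y)) := ⟨hx₂u1, hy₃u2⟩
      have hvk : rho K M hcor v = 0 := by
        have h1 : KerMinusH K M r u ≤ LinearMap.ker (rho K M hcor) := by
          rw [KerMinusH]
          refine iSup₂_le fun x hx => le_trans (hx₂max ⟨x, hx⟩ (Set.mem_univ _)) ?_
          exact ker_rho_le K M (show u ≤ ((x₂ : X), u.2) from ⟨hx₂u1, le_rfl⟩)
            (show ((x₂ : X), u.2) ≤ ((x₂ : X), (y₃ : Y)) from ⟨le_rfl, hy₃u2⟩) hcor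
        have h2 : KerPlusV K M t u ≤ LinearMap.ker (rho K M hcor) := by
          refine le_trans ?_ (ker_rho_le K M
            (show u ≤ (u.1, (y₃ : Y)) from ⟨le_rfl, hy₃u2⟩)
            (show (u.1, (y₃ : Y)) ≤ ((x₂ : X), (y₃ : Y)) from ⟨hx₂u1, le_rfl⟩) hcor)
          rw [KerPlusV]
          exact iInf₂_le y₃ ⟨hy₃t, hy₃u2⟩
        exact LinearMap.mem_ker.mp ((sup_le h1 h2) hv4)
      have hscor : (u.1, (y₀ : Y)) ≤ ((x₂ : X), (y₃ : Y)) := ⟨hx₂u1, hy₀u.trans hy₃u2⟩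
      have hwk : rho K M hscor (rho K M hAs z) = 0 := by
        rw [rho_rho K M hAs hscor (show ((x₁ : X), (y₁ : Y)) ≤ ((x₂ : X), (y₃ : Y)) from
            ⟨hx₁u1.trans hx₂u1, hy₁u2.trans hy₃u2⟩) z,
          ← rho_rho K M hAu hcor (show ((x₁ : X), (y₁ : Y)) ≤ ((x₂ : X), (y₃ : Y)) from
            ⟨hx₁u1.trans hx₂u1, hy₁u2.trans hy₃u2⟩) z, hz, hvk]
      have hmem : rho K M hAs z ∈ LinearMap.ker (rho K M hscor) :=
        LinearMap.mem_ker.mpr hwk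
      rw [(hwe (u.1, (y₀ : Y)) ((x₂ : X), (y₃ : Y)) hscor).2] at hmem
      have ha : LinearMap.ker (rho K M (show (u.1, (y₀ : Y)) ≤ ((x₂ : X), (y₀ : Y)) from
          ⟨hscor.1, le_rfl⟩)) ≤ KerMinusH K M r (u.1, (y₀ : Y)) := by
        rw [KerMinusH]
        exact le_iSup₂_of_le x₂ ⟨hx₂r, hx₂u1⟩ le_rfl
      have hb : LinearMap.ker (rho K M (show (u.1, (y₀ : Y)) ≤ (u.1, (y₃ : Y)) from
          ⟨le_rfl, hscor.2⟩)) ≤ KerPlusV K M t (u.1, (y₀ : Y)) := by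
        rw [KerPlusV]
        refine le_iInf fun y => le_iInf fun hy => ?_
        intro w' hw'
        rw [LinearMap.mem_ker] at hw' ⊢
        have hyu2 : u.2 ≤ y := (t.lt u.2 hu2t y hy.1).le
        have hmem2 : rho K M hsu w' ∈ LinearMap.ker (rho K M
            (show u ≤ (u.1, (y₃ : Y)) from ⟨le_rfl, hy₃u2⟩)) := by
          rw [LinearMap.mem_ker, rho_rho K M hsu
            (show u ≤ (u.1, (y₃ : Y)) from ⟨le_rfl, hy₃u2⟩)
            (show (u.1, (y₀ : Y)) ≤ (u.1, (y₃ : Y)) from ⟨le_rfl, hy₀u.trans hy₃u2⟩) w']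
          exact hw'
        have hmem3 := hy₃min ⟨y, hy.1⟩ (Set.mem_univ _) hmem2
        rw [LinearMap.mem_ker] at hmem3
        rw [← rho_rho K M hsu (show u ≤ (u.1, (y : Y)) from ⟨le_rfl, hyu2⟩)
          (show (u.1, (y₀ : Y)) ≤ (u.1, (y : Y)) from ⟨le_rfl, hy₀u.trans hyu2⟩) w']
        exact hmem3
      exact sup_le_sup ha hb hmem

theorem ker_le_KerMinusH (M : PersistenceModule K (X × Y)) (r : Cut X) {u : X × Y}
    {x : X} (hx : x ∈ r.lower ∧ u.1 ≤ x) :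
    LinearMap.ker (rho K M (show u ≤ ((x : X), u.2) from ⟨hx.2, le_rfl⟩)) ≤
      KerMinusH K M r u := by
  rw [KerMinusH]
  exact le_iSup₂_of_le x hx le_rfl

theorem ker_le_KerMinusV (M : PersistenceModule K (X × Y)) (t : Cut Y) {u : X × Y}
    {y : Y} (hy : y ∈ t.lower ∧ u.2 ≤ y) :
    LinearMap.ker (rho K M (show u ≤ (u.1, (y : Y)) from ⟨le_rfl, hy.2⟩)) ≤
      KerMinusV K M t u := by
  rw [KerMinusV]
  exact le_iSup₂_of_le y hy le_rfl

theorem exists_KerMinusH_eq (M : PersistenceModule K (X × Y)) (hM : Pfd K M) (r : Cut X)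
    {u : X × Y} (hur : u.1 ∈ r.lower) :
    ∃ c : {x : X // x ∈ r.lower ∧ u.1 ≤ x},
      KerMinusH K M r u = LinearMap.ker (rho K M
        (show u ≤ ((c.1 : X), u.2) from ⟨c.2.2, le_rfl⟩)) := by
  haveI := hM u
  obtain ⟨c, -, hmax⟩ :=
    exists_max_submodule K (Set.univ : Set {x : X // x ∈ r.lower ∧ u.1 ≤ x})
      ⟨⟨u.1, hur, le_rfl⟩, Set.mem_univ _⟩
      (fun a => LinearMap.ker (rho K M
        (show u ≤ ((a.1 : X), u.2) from ⟨a.2.2, le_rfl⟩)))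
      (fun a _ c _ => by
        rcases le_total a.1 c.1 with hac | hca
        · exact Or.inl (ker_rho_le K M _
            (show ((a.1 : X), u.2) ≤ ((c.1 : X), u.2) from ⟨hac, le_rfl⟩) _)
        · exact Or.inr (ker_rho_le K M _
            (show ((c.1 : X), u.2) ≤ ((a.1 : X), u.2) from ⟨hca, le_rfl⟩) _))
  refine ⟨c, le_antisymm ?_ ?_⟩
  · rw [KerMinusH]
    exact iSup₂_le fun x hx => hmax ⟨x, hx⟩ (Set.mem_univ _)
  · exact ker_le_KerMinusH K M r c.2

theorem exists_KerMinusV_eq (M : PersistenceModule K (X × Y)) (hM : Pfd K M) (t : Cut Y)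
    {u : X × Y} (hut : u.2 ∈ t.lower) :
    ∃ c : {y : Y // y ∈ t.lower ∧ u.2 ≤ y},
      KerMinusV K M t u = LinearMap.ker (rho K M
        (show u ≤ (u.1, (c.1 : Y)) from ⟨le_rfl, c.2.2⟩)) := by
  haveI := hM u
  obtain ⟨c, -, hmax⟩ :=
    exists_max_submodule K (Set.univ : Set {y : Y // y ∈ t.lower ∧ u.2 ≤ y})
      ⟨⟨u.2, hut, le_rfl⟩, Set.mem_univ _⟩
      (fun a => LinearMap.ker (rho K M
        (show u ≤ (u.1, (a.1 : Y)) from ⟨le_rfl, a.2.2⟩)))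
      (fun a _ c _ => by
        rcases le_total a.1 c.1 with hac | hca
        · exact Or.inl (ker_rho_le K M _
            (show (u.1, (a.1 : Y)) ≤ (u.1, (c.1 : Y)) from ⟨le_rfl, hac⟩) _)
        · exact Or.inr (ker_rho_le K M _
            (show (u.1, (c.1 : Y)) ≤ (u.1, (a.1 : Y)) from ⟨le_rfl, hca⟩) _))
  refine ⟨c, le_antisymm ?_ ?_⟩
  · rw [KerMinusV]
    exact iSup₂_le fun y hy => hmax ⟨y, hy⟩ (Set.mem_univ _)
  · exact ker_le_KerMinusV K M t c.2

/-- **Statement 10.** Computation of the filtration spaces of the double filtration, i.e. of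
the filtration spaces of `N = V⁺_R(M)`, at points of `R`. -/
theorem double_filtration_computations
    (K : Type) [Field K] (X Y : Type) [LinearOrder X] [LinearOrder Y]
    (M : PersistenceModule K (X × Y)) (hM : Pfd K M) (hwe : WeaklyExact K M)
    (l r : Cut X) (b t : Cut Y) :
    ∀ u ∈ rectOf l r b t,
      ImPlusH K (VplusMod K M l r b t) l u =
        Submodule.comap (VplusSub K M l r b t u).subtype (VplusAt K M l r b t u) ∧
      ImPlusV K (VplusMod K M l r b t) b u =
        Submodule.comap (VplusSub K M l r b t u).subtype (VplusAt K M l r b t u) ∧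
      ImMinusH K (VplusMod K M l r b t) l u = ⊥ ∧
      ImMinusV K (VplusMod K M l r b t) b u = ⊥ ∧
      KerPlusH K (VplusMod K M l r b t) r u =
        Submodule.comap (VplusSub K M l r b t u).subtype (KerPlusH K M r u) ∧
      KerMinusH K (VplusMod K M l r b t) r u =
        Submodule.comap (VplusSub K M l r b t u).subtype (KerMinusH K M r u) ∧
      KerPlusV K (VplusMod K M l r b t) t u =
        Submodule.comap (VplusSub K M l r b t u).subtype (KerPlusV K M t u) ∧
      KerMinusV K (VplusMod K M l r b t) t u =
        Submodule.comap (VplusSub K M l r b t u).subtype (KerMinusV K M t u) ∧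
      KerPlusH K (VplusMod K M l r b t) r u ⊓ KerPlusV K (VplusMod K M l r b t) t u ≤
        ImPlusR K (VplusMod K M l r b t) l b u := by
  intro u hu
  have hAt := VplusSub_eq_VplusAt K M l r b t hu
  have hcomapV : Submodule.comap (VplusSub K M l r b t u).subtype
      (VplusAt K M l r b t u) = ⊤ := by
    rw [eq_top_iff]
    intro w _
    rw [Submodule.mem_comap]
    exact hAt.le w.2
  have hImH : ImPlusH K (VplusMod K M l r b t) l u = ⊤ := by
    rw [eq_top_iff]
    intro w _
    rw [ImPlusH, Submodule.mem_iInf]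
    intro x
    rw [Submodule.mem_iInf]
    intro hx
    have hsR : ((x : X), u.2) ∈ rectOf l r b t :=
      ⟨⟨hx.1, r.mem_lower_of_le hu.1.2 hx.2⟩, hu.2⟩
    have hwv : w.1 ∈ VplusAt K M l r b t u := hAt.le w.2
    obtain ⟨w₀, hw₀, hww⟩ := surjH K M hM hwe l r b t hu hx.1 hx.2 hwv
    refine LinearMap.mem_range.mpr ⟨⟨w₀, ?_⟩, ?_⟩
    · exact (VplusSub_eq_VplusAt K M l r b t hsR).ge hw₀
    · exact Subtype.ext hww
  have hImV : ImPlusV K (VplusMod K M l r b t) b u = ⊤ := by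
    rw [eq_top_iff]
    intro w _
    rw [ImPlusV, Submodule.mem_iInf]
    intro y
    rw [Submodule.mem_iInf]
    intro hy
    have hsR : (u.1, (y : Y)) ∈ rectOf l r b t :=
      ⟨hu.1, ⟨hy.1, t.mem_lower_of_le hu.2.2 hy.2⟩⟩
    have hwv : w.1 ∈ VplusAt K M l r b t u := hAt.le w.2
    obtain ⟨w₀, hw₀, hww⟩ := surjV K M hM hwe l r b t hu hy.1 hy.2 hwv
    refine LinearMap.mem_range.mpr ⟨⟨w₀, ?_⟩, ?_⟩
    · exact (VplusSub_eq_VplusAt K M l r b t hsR).ge hw₀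
    · exact Subtype.ext hww
  have hImMH : ImMinusH K (VplusMod K M l r b t) l u = ⊥ := by
    rw [ImMinusH]
    refine le_bot_iff.mp (iSup₂_le fun x hx => ?_)
    rintro _ ⟨w, rfl⟩
    have hbot : VplusSub K M l r b t ((x : X), u.2) = ⊥ :=
      VplusSub_eq_bot K M l r b t fun s hs hle =>
        not_le.mpr (l.lt x hx.1 s.1 hs.1.1) hle.1
    have hw0 : w = 0 := Subtype.ext ((Submodule.mem_bot K).mp (hbot.le w.2))
    rw [hw0, map_zero]
    exact Submodule.zero_mem ⊥
  have hImMV : ImMinusV K (VplusMod K M l r b t) b u = ⊥ := by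
    rw [ImMinusV]
    refine le_bot_iff.mp (iSup₂_le fun y hy => ?_)
    rintro _ ⟨w, rfl⟩
    have hbot : VplusSub K M l r b t (u.1, (y : Y)) = ⊥ :=
      VplusSub_eq_bot K M l r b t fun s hs hle =>
        not_le.mpr (b.lt y hy.1 s.2 hs.2.1) hle.2
    have hw0 : w = 0 := Subtype.ext ((Submodule.mem_bot K).mp (hbot.le w.2))
    rw [hw0, map_zero]
    exact Submodule.zero_mem ⊥
  have hKPH : KerPlusH K (VplusMod K M l r b t) r u =
      Submodule.comap (VplusSub K M l r b t u).subtype (KerPlusH K M r u) := by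
    ext w
    change _ ↔ (Subtype.val w : M.obj u) ∈ KerPlusH K M r u
    rw [KerPlusH, KerPlusH]
    rw [Submodule.mem_iInf, Submodule.mem_iInf]
    refine forall_congr' fun x => ?_
    rw [Submodule.mem_iInf, Submodule.mem_iInf]
    refine forall_congr' fun hx => ?_
    rw [LinearMap.mem_ker, LinearMap.mem_ker]
    exact ⟨fun h0 => congrArg Subtype.val h0, fun h0 => Subtype.ext h0⟩
  have hKPV : KerPlusV K (VplusMod K M l r b t) t u =
      Submodule.comap (VplusSub K M l r b t u).subtype (KerPlusV K M t u) := by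
    ext w
    change _ ↔ (Subtype.val w : M.obj u) ∈ KerPlusV K M t u
    rw [KerPlusV, KerPlusV]
    rw [Submodule.mem_iInf, Submodule.mem_iInf]
    refine forall_congr' fun y => ?_
    rw [Submodule.mem_iInf, Submodule.mem_iInf]
    refine forall_congr' fun hy => ?_
    rw [LinearMap.mem_ker, LinearMap.mem_ker]
    exact ⟨fun h0 => congrArg Subtype.val h0, fun h0 => Subtype.ext h0⟩
  have hKMH : KerMinusH K (VplusMod K M l r b t) r u =
      Submodule.comap (VplusSub K M l r b t u).subtype (KerMinusH K M r u) := by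
    refine le_antisymm ?_ ?_
    · rw [KerMinusH]
      refine iSup₂_le fun x hx => ?_
      refine le_trans ?_ (Submodule.comap_mono (ker_le_KerMinusH K M r hx))
      intro w hw
      rw [LinearMap.mem_ker] at hw
      erw [Submodule.mem_comap]
      rw [LinearMap.mem_ker]
      exact congrArg Subtype.val hw
    · obtain ⟨c, hceq⟩ := exists_KerMinusH_eq K M hM r hu.1.2
      intro w hw
      change (Subtype.val w : M.obj u) ∈ KerMinusH K M r u at hw
      rw [hceq, LinearMap.mem_ker] at hw
      rw [KerMinusH]
      refine Submodule.mem_iSup_of_mem c.1 ?_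
      refine Submodule.mem_iSup_of_mem c.2 ?_
      rw [LinearMap.mem_ker]
      exact Subtype.ext hw
  have hKMV : KerMinusV K (VplusMod K M l r b t) t u =
      Submodule.comap (VplusSub K M l r b t u).subtype (KerMinusV K M t u) := by
    refine le_antisymm ?_ ?_
    · rw [KerMinusV]
      refine iSup₂_le fun y hy => ?_
      refine le_trans ?_ (Submodule.comap_mono (ker_le_KerMinusV K M t hy))
      intro w hw
      rw [LinearMap.mem_ker] at hw
      erw [Submodule.mem_comap]
      rw [LinearMap.mem_ker]
      exact congrArg Subtype.val hw
    · obtain ⟨c, hceq⟩ := exists_KerMinusV_eq K M hM t hu.2.2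
      intro w hw
      change (Subtype.val w : M.obj u) ∈ KerMinusV K M t u at hw
      rw [hceq, LinearMap.mem_ker] at hw
      rw [KerMinusV]
      refine Submodule.mem_iSup_of_mem c.1 ?_
      refine Submodule.mem_iSup_of_mem c.2 ?_
      rw [LinearMap.mem_ker]
      exact Subtype.ext hw
  refine ⟨hImH.trans hcomapV.symm, hImV.trans hcomapV.symm, hImMH, hImMV, hKPH, hKMH,
    hKPV, hKMV, ?_⟩
  rw [ImPlusR, hImH, hImV, top_inf_eq]
  exact le_top
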